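/- Let d ≥ 1 and let G_d ∈ ℂ[[z,t]] be the power series (1−t²)·∏_{m=0}^{d}(1−z·t^{2m})^{−1} = (1−t²)/((1−z)(1−z·t²)⋯(1−z·t^{2d})). Then the bivariate Poincaré series of the algebra of covariants of the binary d-form satisfies P_d(z,t) = Ψ_d(G_d); that is, for all i,m ∈ ℕ, the coefficient of z^i t^m in P_d equals the coefficient of z^i t^{d·i−m} in G_d when m ≤ d·i, and equals 0 when m > d·i. -/

import Mathlib

open Finset MvPowerSeries

namespace CSaux

/-- counting finset: α with Σα = i and weight-double 2Σkα = j -/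
noncomputable def Aset2 (d i j : ℕ) : Finset (Fin (d+1) →₀ ℕ) :=
  (Finset.finsuppAntidiag (Finset.univ : Finset (Fin (d+1))) i).filter
    (fun α => 2 * ∑ k : Fin (d+1), (k : ℕ) * α k = j)

lemma fin2_eq (e : Fin 2 →₀ ℕ) : e = Finsupp.single 0 (e 0) + Finsupp.single 1 (e 1) := by
  ext a; fin_cases a <;> simp

/-- geometric series (1 - z t^{2k})⁻¹ given coefficientwise -/
noncomputable def geo (k : ℕ) : MvPowerSeries (Fin 2) ℂ :=
  fun e => if e 1 = 2 * k * e 0 then 1 else 0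

lemma coeff_geo (k : ℕ) (e : Fin 2 →₀ ℕ) :
    MvPowerSeries.coeff e (geo k) = if e 1 = 2 * k * e 0 then 1 else 0 := rfl

lemma single_le_fin2 (a b : ℕ) (e : Fin 2 →₀ ℕ) :
    Finsupp.single (0 : Fin 2) a + Finsupp.single 1 b ≤ e ↔ a ≤ e 0 ∧ b ≤ e 1 := by
  rw [Finsupp.le_def]
  constructor
  · intro h
    refine ⟨?_, ?_⟩
    · simpa using h 0
    · simpa using h 1
  · rintro ⟨h1, h2⟩ a
    fin_cases a <;> simpa

lemma factor_mul_geo (k : ℕ) :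
    ((1 : MvPowerSeries (Fin 2) ℂ) - X 0 * X 1 ^ (2*k)) * geo k = 1 := by
  have hX : (X 0 : MvPowerSeries (Fin 2) ℂ) * X 1 ^ (2*k)
      = monomial (Finsupp.single 0 1 + Finsupp.single 1 (2*k)) 1 := by
    rw [X, X_pow_eq, monomial_mul_monomial, one_mul]
  ext e
  rw [sub_mul, one_mul, map_sub, hX, coeff_monomial_mul, coeff_geo, coeff_one]
  have he : (e = 0) ↔ e 0 = 0 ∧ e 1 = 0 := by
    constructor
    · intro h; simp [h]
    · rintro ⟨h1, h2⟩; rw [fin2_eq e, h1, h2]; simp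
  have hsub0 : (e - (Finsupp.single (0:Fin 2) 1 + Finsupp.single (1:Fin 2) (2*k)) : Fin 2 →₀ ℕ) 0 = e 0 - 1 := by
    rw [Finsupp.tsub_apply]; simp
  have hsub1 : (e - (Finsupp.single (0:Fin 2) 1 + Finsupp.single (1:Fin 2) (2*k)) : Fin 2 →₀ ℕ) 1 = e 1 - 2*k := by
    rw [Finsupp.tsub_apply]; simp
  rw [coeff_geo]
  simp only [single_le_fin2, hsub0, hsub1]
  have hms : 2*k*(e 0 - 1) = 2*k*(e 0) - 2*k := Nat.mul_sub (2*k) (e 0) 1 |>.trans (by ring_nf)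
  by_cases h0 : e 0 = 0
  · by_cases h1 : e 1 = 0
    · have : e = 0 := he.mpr ⟨h0, h1⟩
      rw [if_pos this]
      simp [h0, h1]
    · have : ¬ (e = 0) := fun h => h1 (he.mp h).2
      rw [if_neg this]
      rw [if_neg (by simp [h0, h1]), if_neg (by omega)]
      ring
  · have hne : ¬ (e = 0) := fun h => h0 (he.mp h).1
    rw [if_neg hne]
    have hk2 : 2*k ≤ 2*k*(e 0) := Nat.le_mul_of_pos_right _ (by omega)
    by_cases hgeom : e 1 = 2*k*(e 0)
    · rw [if_pos hgeom, if_pos ⟨by omega, by omega⟩, if_pos (by rw [hgeom, hms]), one_mul]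
      ring
    · rw [if_neg hgeom]
      by_cases hle : 1 ≤ e 0 ∧ 2*k ≤ e 1
      · rw [if_pos hle, if_neg (by rw [hms]; omega)]
        ring
      · rw [if_neg hle]; ring

lemma inv_factor (k : ℕ) :
    ((1 : MvPowerSeries (Fin 2) ℂ) - X 0 * X 1 ^ (2*k))⁻¹ = geo k := by
  rw [MvPowerSeries.inv_eq_iff_mul_eq_one, mul_comm]
  · exact factor_mul_geo k
  · rw [map_sub, map_mul, map_one, map_pow]
    simp

lemma sum_indicator_card {β : Type*} (S : Finset β) (P : β → Prop) [DecidablePred P] (f : β → ℂ)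
    (h1 : ∀ l ∈ S, P l → f l = 1) (h0 : ∀ l ∈ S, ¬ P l → f l = 0) :
    ∑ l ∈ S, f l = ((S.filter P).card : ℂ) := by
  rw [← Finset.sum_boole]
  refine Finset.sum_congr rfl fun l hl => ?_
  by_cases h : P l
  · rw [h1 l hl h, if_pos h]
  · rw [h0 l hl h, if_neg h]

noncomputable def toL (d : ℕ) (α : Fin (d+1) →₀ ℕ) : ℕ →₀ (Fin 2 →₀ ℕ) :=
  Finsupp.onFinset (Finset.range (d+1))
    (fun k => if h : k < d+1 then
      (Finsupp.single (0:Fin 2) (α ⟨k, h⟩) + Finsupp.single (1:Fin 2) (2 * k * α ⟨k, h⟩)) else 0)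
    (fun k hk => by rw [Finset.mem_range]; by_contra hc; exact hk (dif_neg hc))

lemma toL_apply (d : ℕ) (α : Fin (d+1) →₀ ℕ) (k : ℕ) (h : k < d+1) :
    toL d α k = Finsupp.single (0:Fin 2) (α ⟨k, h⟩) + Finsupp.single (1:Fin 2) (2 * k * α ⟨k, h⟩) := by
  show (Finsupp.onFinset _ _ _ : ℕ →₀ (Fin 2 →₀ ℕ)) k = _
  rw [Finsupp.onFinset_apply, dif_pos h]

lemma toL_apply0 (d : ℕ) (α : Fin (d+1) →₀ ℕ) (k : ℕ) (h : k < d+1) :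
    (toL d α k) 0 = α ⟨k, h⟩ := by
  rw [toL_apply d α k h]; simp

lemma toL_apply1 (d : ℕ) (α : Fin (d+1) →₀ ℕ) (k : ℕ) (h : k < d+1) :
    (toL d α k) 1 = 2 * k * α ⟨k, h⟩ := by
  rw [toL_apply d α k h]; simp

lemma toL_support (d : ℕ) (α : Fin (d+1) →₀ ℕ) : (toL d α).support ⊆ Finset.range (d+1) :=
  Finsupp.support_onFinset_subset

lemma coeffQ (d i j : ℕ) :
    MvPowerSeries.coeff (Finsupp.single 0 i + Finsupp.single 1 j)
      (∏ k ∈ Finset.range (d+1), geo k) = ((Aset2 d i j).card : ℂ) := by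
  classical
  rw [MvPowerSeries.coeff_prod]
  rw [sum_indicator_card _ (fun l => ∀ k ∈ Finset.range (d+1), (l k) 1 = 2 * k * (l k) 0) _
    (fun l _ hP => Finset.prod_eq_one fun k hk => by rw [coeff_geo, if_pos (hP k hk)])
    (fun l _ hP => by
      have hP' : ¬ ∀ k ∈ Finset.range (d+1), (l k) 1 = 2 * k * (l k) 0 := hP
      push_neg at hP'
      obtain ⟨k, hk, hne⟩ := hP'
      exact Finset.prod_eq_zero hk (by rw [coeff_geo, if_neg hne]))]
  congr 1
  set e := Finsupp.single (0 : Fin 2) i + Finsupp.single 1 j with he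
  have he0 : e 0 = i := by simp [he]
  have he1 : e 1 = j := by simp [he]
  apply Finset.card_bij
    (fun l _ => Finsupp.equivFunOnFinite.symm (fun k : Fin (d+1) => (l (k:ℕ)) 0))
  · -- maps to Aset2
    intro l hl
    simp only [Finset.mem_filter, Finset.mem_finsuppAntidiag] at hl
    obtain ⟨⟨hsum, hsupp⟩, hgeo⟩ := hl
    have happ : ∀ a : Fin 2, ∑ k ∈ Finset.range (d+1), (l k) a = e a := by
      intro a
      rw [← Finsupp.finset_sum_apply, hsum]
    have hval : ∀ k : Fin (d+1),
        (Finsupp.equivFunOnFinite.symm (fun k : Fin (d+1) => (l (k:ℕ)) 0)) k = (l (k:ℕ)) 0 := by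
      intro k; simp
    simp only [Aset2, Finset.mem_filter, Finset.mem_finsuppAntidiag]
    refine ⟨⟨?_, Finset.subset_univ _⟩, ?_⟩
    · have := happ 0
      rw [he0] at this
      rw [← this, ← Fin.sum_univ_eq_sum_range (fun k => (l k) 0)]
      exact Finset.sum_congr rfl fun k _ => hval k
    · have h1 := happ 1
      rw [he1] at h1
      have : ∑ k ∈ Finset.range (d+1), (l k) 1
          = ∑ k ∈ Finset.range (d+1), 2 * k * (l k) 0 :=
        Finset.sum_congr rfl fun k hk => hgeo k hk
      rw [this] at h1
      rw [← h1, Finset.mul_sum, ← Fin.sum_univ_eq_sum_range (fun k =>  2 * k * (l k) 0)]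
      refine Finset.sum_congr rfl fun k _ => ?_
      rw [hval k]; ring
  · -- injective
    intro l hl l' hl' heq
    simp only [Finset.mem_filter, Finset.mem_finsuppAntidiag] at hl hl'
    have hval : ∀ k : Fin (d+1), (l (k:ℕ)) 0 = (l' (k:ℕ)) 0 := by
      intro k
      have := congrArg (fun f => f k) heq
      simpa using this
    ext n a
    by_cases hn : n ∈ Finset.range (d+1)
    · have h0 : (l n) 0 = (l' n) 0 := by
        have hlt : n < d + 1 := Finset.mem_range.mp hn
        simpa using hval ⟨n, hlt⟩
      have h1 : (l n) 1 = (l' n) 1 := by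
        rw [hl.2 n hn, hl'.2 n hn, h0]
      rw [fin2_eq (l n), fin2_eq (l' n), h0, h1]
    · have hz : l n = 0 := by
        by_contra hc
        exact hn (hl.1.2 (Finsupp.mem_support_iff.mpr hc))
      have hz' : l' n = 0 := by
        by_contra hc
        exact hn (hl'.1.2 (Finsupp.mem_support_iff.mpr hc))
      rw [hz, hz']
  · -- surjective
    intro α hα
    simp only [Aset2, Finset.mem_filter, Finset.mem_finsuppAntidiag] at hα
    obtain ⟨⟨hsum, -⟩, hw⟩ := hα
    refine ⟨toL d α, ?_, ?_⟩
    · simp only [Finset.mem_filter, Finset.mem_finsuppAntidiag]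
      refine ⟨⟨?_, toL_support d α⟩, ?_⟩
      · ext a
        rw [Finsupp.finset_sum_apply]
        have hfin : ∑ k ∈ Finset.range (d+1), (toL d α k) a
            = ∑ k : Fin (d+1), (toL d α (k:ℕ)) a :=
          (Fin.sum_univ_eq_sum_range (fun k => (toL d α k) a) (d+1)).symm
        rw [hfin]
        have hterm : ∀ k : Fin (d+1), (toL d α (k:ℕ)) a
            = (Finsupp.single (0:Fin 2) (α k) + Finsupp.single (1:Fin 2) (2*(k:ℕ)*α k) : Fin 2 →₀ ℕ) a := by
          intro k
          rw [toL_apply d α (k:ℕ) k.isLt]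
        rw [Finset.sum_congr rfl fun k _ => hterm k]
        fin_cases a
        · simp only [he, Finsupp.add_apply, Finsupp.single_apply]
          simpa using hsum
        · simp only [he, Finsupp.add_apply, Finsupp.single_apply]
          simp only [Fin.ext_iff, Fin.val_zero, Fin.val_one, show ((0:ℕ) = 1) = False by simp,
            if_false, zero_add, if_true, Fin.isValue]
          rw [← hw, Finset.mul_sum]
          exact Finset.sum_congr rfl fun k _ => by ring
      · intro k hk
        have hlt : k < d+1 := Finset.mem_range.mp hk
        rw [toL_apply1 d α k hlt, toL_apply0 d α k hlt]
    · ext k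
      rw [Finsupp.equivFunOnFinite_symm_apply_apply, toL_apply0 d α (k:ℕ) k.isLt, Fin.eta]

lemma single_le_single_fin2 (j : ℕ) (i : ℕ) (c : ℕ) :
    Finsupp.single (1:Fin 2) c ≤ Finsupp.single (0:Fin 2) i + Finsupp.single 1 j ↔ c ≤ j := by
  rw [Finsupp.le_def]
  constructor
  · intro h
    simpa using h 1
  · intro h a
    fin_cases a <;> simp [h]

lemma coeffG (d i j : ℕ) :
    MvPowerSeries.coeff (Finsupp.single 0 i + Finsupp.single 1 j)
      ((1 - (MvPowerSeries.X 1 : MvPowerSeries (Fin 2) ℂ) ^ 2) *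
        ∏ k ∈ Finset.range (d + 1),
          (1 - (MvPowerSeries.X 0 : MvPowerSeries (Fin 2) ℂ) *
            (MvPowerSeries.X 1) ^ (2 * k))⁻¹)
    = ((Aset2 d i j).card : ℂ) - (if 2 ≤ j then ((Aset2 d i (j-2)).card : ℂ) else 0) := by
  have hprod : (∏ k ∈ Finset.range (d+1),
        (1 - (X 0 : MvPowerSeries (Fin 2) ℂ) * X 1 ^ (2*k))⁻¹)
      = ∏ k ∈ Finset.range (d+1), geo k :=
    Finset.prod_congr rfl fun k _ => inv_factor k
  rw [hprod, sub_mul, one_mul, map_sub, coeffQ]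
  congr 1
  rw [X_pow_eq, coeff_monomial_mul]
  by_cases h2 : 2 ≤ j
  · rw [if_pos h2, if_pos ((single_le_single_fin2 j i 2).mpr h2), one_mul]
    have hsub : (Finsupp.single (0:Fin 2) i + Finsupp.single 1 j) - Finsupp.single 1 2
        = Finsupp.single (0:Fin 2) i + Finsupp.single 1 (j-2) := by
      ext a
      rw [Finsupp.tsub_apply]
      fin_cases a <;> simp
    rw [hsub, coeffQ]
  · rw [if_neg h2, if_neg (fun hc => h2 ((single_le_single_fin2 j i 2).mp hc))]

lemma Aset2_odd (d i j : ℕ) (h : j % 2 = 1) : Aset2 d i j = ∅ := by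
  rw [Aset2, Finset.filter_eq_empty_iff]
  intro α _
  omega

end CSaux

noncomputable def Wspace (d i N : ℕ) : Submodule ℂ (MvPolynomial (Fin (d + 1)) ℂ) :=
  Submodule.span ℂ { p | ∃ α : Fin (d + 1) →₀ ℕ,
    (∑ k, α k) = i ∧ (∑ k : Fin (d + 1), (k : ℕ) * α k) = N ∧
    p = MvPolynomial.monomial α 1 }

noncomputable def D1 (d : ℕ) :
    Derivation ℂ (MvPolynomial (Fin (d + 1)) ℂ) (MvPolynomial (Fin (d + 1)) ℂ) :=
  MvPolynomial.mkDerivation ℂ (fun k =>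
    if _h : 0 < (k : ℕ) then
      ((k : ℕ) : ℂ) •
        MvPolynomial.X (⟨(k : ℕ) - 1, lt_of_le_of_lt (Nat.sub_le _ _) k.isLt⟩ : Fin (d + 1))
    else 0)

namespace CSaux2

open MvPolynomial

noncomputable def D2 (d : ℕ) :
    Derivation ℂ (MvPolynomial (Fin (d + 1)) ℂ) (MvPolynomial (Fin (d + 1)) ℂ) :=
  MvPolynomial.mkDerivation ℂ (fun k =>
    if h : (k : ℕ) < d then
      (((d - (k : ℕ) : ℕ)) : ℂ) • MvPolynomial.X (⟨(k : ℕ) + 1, by omega⟩ : Fin (d + 1))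
    else 0)

noncomputable def Hd (d : ℕ) :
    Derivation ℂ (MvPolynomial (Fin (d + 1)) ℂ) (MvPolynomial (Fin (d + 1)) ℂ) :=
  MvPolynomial.mkDerivation ℂ (fun k => (((d:ℂ) - 2*((k:ℕ):ℂ))) • MvPolynomial.X k)

lemma D1_X (d : ℕ) (k : Fin (d+1)) :
    D1 d (MvPolynomial.X k) = if _h : 0 < (k : ℕ) then
      ((k : ℕ) : ℂ) • MvPolynomial.X (⟨(k : ℕ) - 1, by omega⟩ : Fin (d + 1)) else 0 := by
  rw [D1, MvPolynomial.mkDerivation_X]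

lemma D2_X (d : ℕ) (k : Fin (d+1)) :
    D2 d (MvPolynomial.X k) = if h : (k : ℕ) < d then
      (((d - (k : ℕ) : ℕ)) : ℂ) • MvPolynomial.X (⟨(k : ℕ) + 1, by omega⟩ : Fin (d + 1))
    else 0 := by
  rw [D2, MvPolynomial.mkDerivation_X]

lemma Hd_X (d : ℕ) (k : Fin (d+1)) :
    Hd d (MvPolynomial.X k) = (((d:ℂ) - 2*((k:ℕ):ℂ))) • MvPolynomial.X k := by
  rw [Hd, MvPolynomial.mkDerivation_X]

lemma comm_EF (d : ℕ) : ⁅D1 d, D2 d⁆ = Hd d := by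
  apply MvPolynomial.derivation_ext
  intro k
  rw [Derivation.commutator_apply, Hd_X, D1_X, D2_X]
  rcases k with ⟨kv, hkv⟩
  simp only
  by_cases h1 : kv < d
  · rw [dif_pos h1]
    by_cases h0 : 0 < kv
    · rw [dif_pos h0, Derivation.map_smul, Derivation.map_smul, D1_X, D2_X]
      simp only
      rw [dif_pos (show 0 < kv + 1 by omega), dif_pos (show kv - 1 < d by omega)]
      have e1 : (⟨kv + 1 - 1, by omega⟩ : Fin (d+1)) = ⟨kv, hkv⟩ := by
        apply Fin.ext; simp
      have e2 : (⟨kv - 1 + 1, by omega⟩ : Fin (d+1)) = ⟨kv, hkv⟩ := by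
        apply Fin.ext; simp; omega
      rw [e1, e2, smul_smul, smul_smul, ← sub_smul]
      congr 1
      push_cast [Nat.cast_sub h1.le, Nat.cast_sub (show kv - 1 ≤ d by omega),
        Nat.cast_sub (show 1 ≤ kv by omega)]
      ring
    · rw [dif_neg h0, Derivation.map_zero, sub_zero, Derivation.map_smul, D1_X]
      simp only
      rw [dif_pos (show 0 < kv + 1 by omega)]
      have e1 : (⟨kv + 1 - 1, by omega⟩ : Fin (d+1)) = ⟨kv, hkv⟩ := by
        apply Fin.ext; simp
      have hk0 : kv = 0 := by omega
      rw [e1, smul_smul]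
      congr 1
      subst hk0
      norm_num
  · rw [dif_neg h1]
    by_cases h0 : 0 < kv
    · have hkd : kv = d := by omega
      rw [Derivation.map_zero, zero_sub, dif_pos h0, Derivation.map_smul, D2_X]
      simp only
      rw [dif_pos (show kv - 1 < d by omega)]
      have e2 : (⟨kv - 1 + 1, by omega⟩ : Fin (d+1)) = ⟨kv, hkv⟩ := by
        apply Fin.ext; simp; omega
      rw [e2, smul_smul, ← neg_smul]
      congr 1
      subst hkd
      rw [show kv - (kv - 1) = 1 from by omega]
      push_cast
      ring
    · have hk0 : kv = 0 := by omega
      have hd0 : d = 0 := by omega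
      rw [dif_neg h0, Derivation.map_zero, Derivation.map_zero, sub_zero,
        show (((d:ℂ) - 2*((kv:ℕ):ℂ))) = 0 by push_cast [hk0, hd0]; ring, zero_smul]

lemma mono_mem {d : ℕ} (α : Fin (d+1) →₀ ℕ) {i N : ℕ}
    (h1 : (∑ k, α k) = i) (h2 : (∑ k : Fin (d + 1), (k : ℕ) * α k) = N) :
    MvPolynomial.monomial α (1:ℂ) ∈ Wspace d i N :=
  Submodule.subset_span ⟨α, h1, h2, rfl⟩

lemma Sadd {d : ℕ} (w : Fin (d+1) → ℕ) (γ : Fin (d+1) →₀ ℕ) (m : Fin (d+1)) (c : ℕ) :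
    ∑ j, w j * ((γ + Finsupp.single m c : Fin (d+1) →₀ ℕ) j) = (∑ j, w j * γ j) + w m * c := by
  simp only [Finsupp.add_apply, Finsupp.single_apply, mul_add, Finset.sum_add_distrib, mul_ite,
    mul_zero]
  rw [Finset.sum_ite_eq]
  simp

lemma sub_add_single {d : ℕ} (α : Fin (d+1) →₀ ℕ) (k : Fin (d+1)) (h : α k ≠ 0) :
    α - Finsupp.single k 1 + Finsupp.single k 1 = α := by
  ext j
  rw [Finsupp.add_apply, Finsupp.tsub_apply, Finsupp.single_apply]
  by_cases hj : k = j
  · subst hj; simp; omega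
  · simp [hj]

lemma sum_shift {d : ℕ} (w : Fin (d+1) → ℕ) (α : Fin (d+1) →₀ ℕ) (k m : Fin (d+1))
    (hk : α k ≠ 0) :
    (∑ j, w j * ((α - Finsupp.single k 1 + Finsupp.single m 1 : Fin (d+1) →₀ ℕ) j)) + w k
      = (∑ j, w j * α j) + w m := by
  have h1 := Sadd w (α - Finsupp.single k 1) m 1
  have h2 := Sadd w (α - Finsupp.single k 1) k 1
  rw [sub_add_single α k hk] at h2
  rw [h1]
  omega

lemma sum_shift_one {d : ℕ} (α : Fin (d+1) →₀ ℕ) (k m : Fin (d+1)) (hk : α k ≠ 0) :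
    (∑ j, ((α - Finsupp.single k 1 + Finsupp.single m 1 : Fin (d+1) →₀ ℕ) j)) + 1
      = (∑ j, α j) + 1 := by
  simpa using sum_shift (fun _ => 1) α k m hk

lemma sum_shift_val {d : ℕ} (α : Fin (d+1) →₀ ℕ) (k m : Fin (d+1)) (hk : α k ≠ 0) :
    (∑ j : Fin (d+1), (j:ℕ) * ((α - Finsupp.single k 1 + Finsupp.single m 1 : Fin (d+1) →₀ ℕ) j)) + (k:ℕ)
      = (∑ j : Fin (d+1), (j:ℕ) * α j) + (m:ℕ) := by
  simpa using sum_shift (fun j => (j:ℕ)) α k m hk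


lemma smul_helper {d : ℕ} (β : Fin (d+1) →₀ ℕ) (m : Fin (d+1)) (a c : ℂ) :
    (MvPolynomial.monomial β a) • (c • (MvPolynomial.X m : MvPolynomial (Fin (d+1)) ℂ))
      = (a * c) • MvPolynomial.monomial (β + Finsupp.single m 1) (1:ℂ) := by
  rw [smul_eq_mul, mul_smul_comm, MvPolynomial.X, MvPolynomial.monomial_mul, mul_one]
  rw [show (MvPolynomial.monomial (β + Finsupp.single m 1)) a
      = a • (MvPolynomial.monomial (β + Finsupp.single m 1)) (1:ℂ) by
    rw [MvPolynomial.smul_monomial, smul_eq_mul, mul_one]]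
  rw [smul_smul, mul_comm]

lemma D1_mono_mem {d : ℕ} (α : Fin (d+1) →₀ ℕ) {i N : ℕ}
    (h1 : (∑ k, α k = i)) (h2 : (∑ k : Fin (d + 1), (k : ℕ) * α k) = N) :
    D1 d (MvPolynomial.monomial α (1:ℂ)) ∈ Wspace d i (N - 1) := by
  rw [D1, MvPolynomial.mkDerivation_monomial, one_smul]
  apply Submodule.sum_mem
  intro k hk
  have hαk : α k ≠ 0 := Finsupp.mem_support_iff.mp hk
  by_cases h0 : 0 < (k : ℕ)
  · simp only [dif_pos h0]
    rw [smul_helper]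
    apply Submodule.smul_mem
    set m : Fin (d+1) := ⟨(k:ℕ) - 1, by omega⟩ with hm
    apply mono_mem
    · have := sum_shift_one α k m hαk
      omega
    · have := sum_shift_val α k m hαk
      have hmv : (m : ℕ) = (k:ℕ) - 1 := rfl
      omega
  · simp only [dif_neg h0, smul_zero]
    exact Submodule.zero_mem _

lemma D1_mono_zero {d : ℕ} (α : Fin (d+1) →₀ ℕ)
    (h2 : (∑ k : Fin (d + 1), (k : ℕ) * α k) = 0) :
    D1 d (MvPolynomial.monomial α (1:ℂ)) = 0 := by
  rw [D1, MvPolynomial.mkDerivation_monomial, one_smul]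
  apply Finset.sum_eq_zero
  intro k hk
  have hαk : α k ≠ 0 := Finsupp.mem_support_iff.mp hk
  have h0 : ¬ 0 < (k : ℕ) := by
    intro h0
    have hle : (k:ℕ) * α k ≤ ∑ j : Fin (d+1), (j:ℕ) * α j :=
      Finset.single_le_sum (f := fun j : Fin (d+1) => (j:ℕ) * α j)
        (fun j _ => Nat.zero_le _) (Finset.mem_univ k)
    have : (k:ℕ) * α k ≠ 0 := Nat.mul_ne_zero (by omega) hαk
    omega
  simp only [dif_neg h0, smul_zero]

lemma D2_mono_mem {d : ℕ} (α : Fin (d+1) →₀ ℕ) {i N : ℕ}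
    (h1 : (∑ k, α k = i)) (h2 : (∑ k : Fin (d + 1), (k : ℕ) * α k) = N) :
    D2 d (MvPolynomial.monomial α (1:ℂ)) ∈ Wspace d i (N + 1) := by
  rw [D2, MvPolynomial.mkDerivation_monomial, one_smul]
  apply Submodule.sum_mem
  intro k hk
  have hαk : α k ≠ 0 := Finsupp.mem_support_iff.mp hk
  by_cases h0 : (k : ℕ) < d
  · simp only [dif_pos h0]
    rw [smul_helper]
    apply Submodule.smul_mem
    set m : Fin (d+1) := ⟨(k:ℕ) + 1, by omega⟩ with hm
    apply mono_mem
    · have := sum_shift_one α k m hαk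
      omega
    · have := sum_shift_val α k m hαk
      have hmv : (m : ℕ) = (k:ℕ) + 1 := rfl
      omega
  · simp only [dif_neg h0, smul_zero]
    exact Submodule.zero_mem _

lemma Hd_mono {d : ℕ} (α : Fin (d+1) →₀ ℕ) {i N : ℕ}
    (h1 : (∑ k, α k = i)) (h2 : (∑ k : Fin (d + 1), (k : ℕ) * α k) = N) :
    Hd d (MvPolynomial.monomial α (1:ℂ))
      = (((d*i : ℕ) : ℂ) - 2*(N:ℂ)) • MvPolynomial.monomial α (1:ℂ) := by
  rw [Hd, MvPolynomial.mkDerivation_monomial, one_smul]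
  have hterm : ∀ k ∈ α.support,
      (MvPolynomial.monomial (α - Finsupp.single k 1) ((α k : ℂ)))
          • ((((d:ℂ) - 2*((k:ℕ):ℂ))) • MvPolynomial.X k)
        = ((α k : ℂ) * (((d:ℂ) - 2*((k:ℕ):ℂ)))) • MvPolynomial.monomial α (1:ℂ) := by
    intro k hk
    rw [smul_helper, sub_add_single α k (Finsupp.mem_support_iff.mp hk)]
  refine Eq.trans (Finset.sum_congr rfl hterm) ?_
  rw [← Finset.sum_smul]
  congr 1
  have hsupp : ∑ k ∈ α.support, (α k : ℂ) * (((d:ℂ) - 2*((k:ℕ):ℂ)))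
      = ∑ k : Fin (d+1), (α k : ℂ) * (((d:ℂ) - 2*((k:ℕ):ℂ))) := by
    apply Finset.sum_subset (Finset.subset_univ _)
    intro k _ hk
    rw [Finsupp.notMem_support_iff.mp hk]
    simp
  rw [hsupp]
  have c1 : ((∑ k, α k : ℕ) : ℂ) = ∑ k : Fin (d+1), (α k : ℂ) := by push_cast; rfl
  have c2 : ((∑ k : Fin (d + 1), (k : ℕ) * α k : ℕ) : ℂ)
      = ∑ k : Fin (d+1), ((k:ℕ) : ℂ) * (α k : ℂ) := by push_cast; rfl
  rw [h1] at c1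
  rw [h2] at c2
  rw [Finset.sum_congr rfl (fun k _ => by ring_nf :
    ∀ k ∈ Finset.univ, (α k : ℂ) * (((d:ℂ) - 2*((k:ℕ):ℂ)))
      = (d:ℂ) * (α k : ℂ) - 2 * (((k:ℕ):ℂ) * (α k : ℂ)))]
  rw [Finset.sum_sub_distrib, ← Finset.mul_sum, ← Finset.mul_sum, ← c1, ← c2]
  push_cast
  ring

lemma Wspace_ind {d i N : ℕ} (p : MvPolynomial (Fin (d+1)) ℂ → Prop)
    (hmono : ∀ α : Fin (d+1) →₀ ℕ, (∑ k, α k) = i → (∑ k : Fin (d + 1), (k : ℕ) * α k) = N →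
      p (MvPolynomial.monomial α (1:ℂ)))
    (h0 : p 0) (hadd : ∀ x y, p x → p y → p (x+y)) (hsmul : ∀ (a:ℂ) x, p x → p (a • x)) :
    ∀ v ∈ Wspace d i N, p v := by
  intro v hv
  refine Submodule.span_induction (p := fun x _ => p x) ?_ h0 (fun x y _ _ => hadd x y)
    (fun a x _ => hsmul a x) hv
  rintro x ⟨α, h1, h2, rfl⟩
  exact hmono α h1 h2

lemma D1_W {d i N : ℕ} : ∀ v ∈ Wspace d i N, D1 d v ∈ Wspace d i (N-1) :=
  Wspace_ind _ (fun α h1 h2 => by subst h2; exact D1_mono_mem α h1 rfl)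
    (by rw [Derivation.map_zero]; exact Submodule.zero_mem _)
    (fun x y hx hy => by rw [map_add]; exact Submodule.add_mem _ hx hy)
    (fun a x hx => by rw [Derivation.map_smul]; exact Submodule.smul_mem _ a hx)

lemma D2_W {d i N : ℕ} : ∀ v ∈ Wspace d i N, D2 d v ∈ Wspace d i (N+1) :=
  Wspace_ind _ (fun α h1 h2 => by subst h2; exact D2_mono_mem α h1 rfl)
    (by rw [Derivation.map_zero]; exact Submodule.zero_mem _)
    (fun x y hx hy => by rw [map_add]; exact Submodule.add_mem _ hx hy)
    (fun a x hx => by rw [Derivation.map_smul]; exact Submodule.smul_mem _ a hx)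

lemma D1_W0 {d i : ℕ} : ∀ v ∈ Wspace d i 0, D1 d v = 0 :=
  Wspace_ind _ (fun α _ h2 => D1_mono_zero α h2)
    (by rw [Derivation.map_zero])
    (fun x y hx hy => by rw [map_add, hx, hy, add_zero])
    (fun a x hx => by rw [Derivation.map_smul, hx, smul_zero])

lemma Hd_W {d i N : ℕ} : ∀ v ∈ Wspace d i N,
    Hd d v = (((d*i : ℕ) : ℂ) - 2*(N:ℂ)) • v :=
  Wspace_ind _ (fun α h1 h2 => Hd_mono α h1 h2)
    (by rw [Derivation.map_zero, smul_zero])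
    (fun x y hx hy => by rw [map_add, hx, hy, smul_add])
    (fun a x hx => by rw [Derivation.map_smul, hx, smul_comm])

lemma comm_W {d i N : ℕ} (v : MvPolynomial (Fin (d+1)) ℂ) (hv : v ∈ Wspace d i N) :
    D1 d (D2 d v) - D2 d (D1 d v) = (((d*i : ℕ) : ℂ) - 2*(N:ℂ)) • v := by
  calc D1 d (D2 d v) - D2 d (D1 d v) = ⁅D1 d, D2 d⁆ v := (Derivation.commutator_apply v).symm
  _ = Hd d v := by rw [comm_EF]
  _ = _ := Hd_W v hv

lemma eig {d i : ℕ} : ∀ M : ℕ, 2*M < d*i → ∀ (lam : ℂ) (v : MvPolynomial (Fin (d+1)) ℂ),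
    v ∈ Wspace d i M → v ≠ 0 → D1 d (D2 d v) = lam • v → ∃ n : ℕ, 0 < n ∧ lam = (n:ℂ) := by
  intro M
  induction M using Nat.strong_induction_on with
  | _ M IH =>
  intro hM lam v hv hv0 heq
  have hcomm := comm_W v hv
  set c : ℂ := (((d*i : ℕ) : ℂ) - 2*((M:ℕ):ℂ)) with hcdef
  have hc : c = ((d*i - 2*M : ℕ) : ℂ) := by
    rw [hcdef, Nat.cast_sub (by omega)]
    push_cast
    ring
  have hFE : D2 d (D1 d v) = (lam - c) • v := by
    have h' : D1 d (D2 d v) - c • v = D2 d (D1 d v) := by rw [← hcomm]; ring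
    rw [← h', heq, ← sub_smul]
  rcases Nat.eq_zero_or_pos M with hM0 | hMpos
  · subst hM0
    have hE0 : D1 d v = 0 := D1_W0 v hv
    rw [hE0, Derivation.map_zero] at hFE
    have hlamc : lam = c := by
      by_contra hne
      exact hv0 ((smul_eq_zero.mp hFE.symm).resolve_left (sub_ne_zero.mpr hne))
    refine ⟨d*i, by omega, ?_⟩
    rw [hlamc, hc]
    norm_num
  · by_cases hlc : lam = c
    · exact ⟨d*i - 2*M, by omega, by rw [hlc, hc]⟩
    · have hEv0 : D1 d v ≠ 0 := by
        intro h0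
        rw [h0, Derivation.map_zero] at hFE
        exact hlc (sub_eq_zero.mp
          (((smul_eq_zero.mp hFE.symm).resolve_right hv0)))
      have hEvW : D1 d v ∈ Wspace d i (M-1) := D1_W v hv
      have heq' : D1 d (D2 d (D1 d v)) = (lam - c) • D1 d v := by
        rw [hFE, Derivation.map_smul]
      obtain ⟨n, hn, hlamc⟩ := IH (M-1) (by omega) (by omega) (lam - c) (D1 d v) hEvW hEv0 heq'
      refine ⟨n + (d*i - 2*M), by omega, ?_⟩
      have hsplit : lam = (lam - c) + c := by ring
      rw [hsplit, hlamc, hc]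
      push_cast
      ring

noncomputable def Aset (d i N : ℕ) : Finset (Fin (d+1) →₀ ℕ) :=
  (Finset.finsuppAntidiag (Finset.univ : Finset (Fin (d+1))) i).filter
    (fun α => ∑ k : Fin (d+1), (k : ℕ) * α k = N)

lemma mem_Aset {d i N : ℕ} (α : Fin (d+1) →₀ ℕ) :
    α ∈ Aset d i N ↔ (∑ k, α k) = i ∧ (∑ k : Fin (d + 1), (k : ℕ) * α k) = N := by
  rw [Aset, Finset.mem_filter, Finset.mem_finsuppAntidiag]
  constructor
  · rintro ⟨⟨h1, -⟩, h2⟩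
    exact ⟨h1, h2⟩
  · rintro ⟨h1, h2⟩
    exact ⟨⟨h1, Finset.subset_univ _⟩, h2⟩

lemma Wspace_eq (d i N : ℕ) :
    Wspace d i N = Submodule.span ℂ
      ((fun α : Fin (d+1) →₀ ℕ => MvPolynomial.monomial α (1:ℂ)) '' ↑(Aset d i N)) := by
  rw [Wspace]
  congr 1
  ext p
  constructor
  · rintro ⟨α, h1, h2, rfl⟩
    exact ⟨α, (mem_Aset α).mpr ⟨h1, h2⟩, rfl⟩
  · rintro ⟨α, hα, rfl⟩
    obtain ⟨h1, h2⟩ := (mem_Aset α).mp hα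
    exact ⟨α, h1, h2, rfl⟩

instance Wfin (d i N : ℕ) : FiniteDimensional ℂ (Wspace d i N) := by
  rw [Wspace_eq]
  exact FiniteDimensional.span_of_finite ℂ (((Aset d i N).finite_toSet).image _)

lemma finrank_W (d i N : ℕ) :
    Module.finrank ℂ (Wspace d i N) = (Aset d i N).card := by
  have li : LinearIndependent ℂ
      (fun α : ↥(Aset d i N) => MvPolynomial.monomial (↑α : Fin (d+1) →₀ ℕ) (1:ℂ)) := by
    have h := (MvPolynomial.basisMonomials (Fin (d+1)) ℂ).linearIndependent
    have h2 := h.comp ((↑) : ↥(Aset d i N) → (Fin (d+1) →₀ ℕ)) Subtype.coe_injective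
    simp only [MvPolynomial.coe_basisMonomials] at h2
    exact h2
  have hfr := finrank_span_eq_card li
  have hr : (Set.range fun α : ↥(Aset d i N) =>
        MvPolynomial.monomial (↑α : Fin (d+1) →₀ ℕ) (1:ℂ))
      = (fun α : Fin (d+1) →₀ ℕ => MvPolynomial.monomial α (1:ℂ)) '' ↑(Aset d i N) := by
    ext p
    constructor
    · rintro ⟨⟨α, hα⟩, rfl⟩
      exact ⟨α, hα, rfl⟩
    · rintro ⟨α, hα, rfl⟩
      exact ⟨⟨α, hα⟩, rfl⟩
  rw [Wspace_eq, ← hr, hfr, Fintype.card_coe]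

lemma EF_surj {d i M : ℕ} (h : 2*M < d*i) :
    ∀ u ∈ Wspace d i M, ∃ v ∈ Wspace d i (M+1), D1 d v = u := by
  have hmaps : ∀ x ∈ Wspace d i M,
      ((D1 d).toLinearMap ∘ₗ (D2 d).toLinearMap) x ∈ Wspace d i M := by
    intro x hx
    have h2 := D2_W x hx
    have h1 := D1_W _ h2
    simpa using h1
  set T : Wspace d i M →ₗ[ℂ] Wspace d i M :=
    LinearMap.restrict ((D1 d).toLinearMap ∘ₗ (D2 d).toLinearMap) hmaps with hT
  have hTval : ∀ x : Wspace d i M, (T x : MvPolynomial (Fin (d+1)) ℂ) = D1 d (D2 d (x : MvPolynomial (Fin (d+1)) ℂ)) := by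
    intro x
    rw [hT, LinearMap.restrict_apply]
    rfl
  have hTinj : Function.Injective T := by
    rw [← LinearMap.ker_eq_bot, Submodule.eq_bot_iff]
    intro x hx
    by_contra hx0
    have hxv0 : (x : MvPolynomial (Fin (d+1)) ℂ) ≠ 0 := by
      intro hh
      exact hx0 (Subtype.ext hh)
    have hzero : D1 d (D2 d (x : MvPolynomial (Fin (d+1)) ℂ))
        = (0:ℂ) • (x : MvPolynomial (Fin (d+1)) ℂ) := by
      rw [zero_smul, ← hTval]
      exact congrArg Subtype.val (LinearMap.mem_ker.mp hx)
    obtain ⟨n, hn, h0n⟩ := eig M h 0 _ x.2 hxv0 hzero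
    have : (n : ℂ) = 0 := h0n.symm
    rw [Nat.cast_eq_zero] at this
    omega
  have hTsurj : Function.Surjective T := (LinearMap.injective_iff_surjective).mp hTinj
  intro u hu
  obtain ⟨x, hx⟩ := hTsurj ⟨u, hu⟩
  refine ⟨D2 d (x : MvPolynomial (Fin (d+1)) ℂ), D2_W _ x.2, ?_⟩
  have := congrArg Subtype.val hx
  rw [hTval] at this
  exact this

lemma dim_ker_W {d i N : ℕ} (hN : 0 < N) (h2 : 2*N ≤ d*i) :
    Module.finrank ℂ ↥(Wspace d i N ⊓ LinearMap.ker (D1 d).toLinearMap)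
      + (Aset d i (N-1)).card = (Aset d i N).card := by
  have hmaps : ∀ x ∈ Wspace d i N, (D1 d).toLinearMap x ∈ Wspace d i (N-1) := fun x hx => D1_W x hx
  set E' : Wspace d i N →ₗ[ℂ] Wspace d i (N-1) := LinearMap.restrict _ hmaps with hE'
  have hrn := LinearMap.finrank_range_add_finrank_ker E'
  have hsurj : Function.Surjective E' := by
    intro u
    obtain ⟨v, hv, hEv⟩ := EF_surj (show 2*(N-1) < d*i by omega) (u : MvPolynomial (Fin (d+1)) ℂ) u.2
    have hvN : v ∈ Wspace d i N := by
      rw [show N - 1 + 1 = N by omega] at hv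
      exact hv
    refine ⟨⟨v, hvN⟩, ?_⟩
    apply Subtype.ext
    rw [hE', LinearMap.restrict_apply]
    exact hEv
  have hrange : Module.finrank ℂ (LinearMap.range E') = (Aset d i (N-1)).card := by
    rw [LinearMap.range_eq_top.mpr hsurj, finrank_top, finrank_W]
  have hker : Module.finrank ℂ (LinearMap.ker E')
      = Module.finrank ℂ ↥(Wspace d i N ⊓ LinearMap.ker (D1 d).toLinearMap) := by
    rw [hE', LinearMap.ker_restrict hmaps]
    have hcomap : Submodule.comap (Wspace d i N).subtype (LinearMap.ker (D1 d).toLinearMap)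
        = Submodule.comap (Wspace d i N).subtype
            (Wspace d i N ⊓ LinearMap.ker (D1 d).toLinearMap) := by
      rw [Submodule.comap_inf, Submodule.comap_subtype_self, top_inf_eq]
    rw [hcomap]
    exact (Submodule.comapSubtypeEquivOfLe inf_le_left).finrank_eq
  rw [hrange, hker, finrank_W] at hrn
  rw [← hrn]
  omega

lemma dim_ker_W0 {d i : ℕ} :
    Module.finrank ℂ ↥(Wspace d i 0 ⊓ LinearMap.ker (D1 d).toLinearMap)
      = (Aset d i 0).card := by
  have hle : Wspace d i 0 ≤ LinearMap.ker (D1 d).toLinearMap := by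
    intro v hv
    rw [LinearMap.mem_ker]
    exact D1_W0 v hv
  rw [inf_eq_left.mpr hle, finrank_W]

end CSaux2

namespace CSaux2

lemma Aset2_even (d i N : ℕ) : CSaux.Aset2 d i (2*N) = Aset d i N := by
  rw [CSaux.Aset2, Aset]
  ext α
  rw [Finset.mem_filter, Finset.mem_filter]
  constructor
  · rintro ⟨h1, h2⟩
    exact ⟨h1, by omega⟩
  · rintro ⟨h1, h2⟩
    exact ⟨h1, by omega⟩

end CSaux2

/-- γ_d(i,j), extended by 0 when j > d·i or d·i − j is odd. -/
noncomputable def gammaC (d i j : ℕ) : ℕ :=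
  if j ≤ d * i ∧ (d * i - j) % 2 = 0 then
    Module.finrank ℂ
      ↥(Wspace d i ((d * i - j) / 2) ⊓ LinearMap.ker (D1 d).toLinearMap)
  else 0

theorem stmt6 (d : ℕ) (hd : 1 ≤ d) (P : MvPowerSeries (Fin 2) ℂ)
    (hP : ∀ i j : ℕ,
      MvPowerSeries.coeff (Finsupp.single 0 i + Finsupp.single 1 j) P = (gammaC d i j : ℂ)) :
    ∀ i m : ℕ,
      MvPowerSeries.coeff (Finsupp.single 0 i + Finsupp.single 1 m) P
        = if m ≤ d * i then
            MvPowerSeries.coeff (Finsupp.single 0 i + Finsupp.single 1 (d * i - m))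
              ((1 - (MvPowerSeries.X 1 : MvPowerSeries (Fin 2) ℂ) ^ 2) *
                ∏ k ∈ Finset.range (d + 1),
                  (1 - (MvPowerSeries.X 0 : MvPowerSeries (Fin 2) ℂ) *
                    (MvPowerSeries.X 1) ^ (2 * k))⁻¹)
          else 0 := by
  intro i m
  rw [hP i m]
  by_cases hm : m ≤ d * i
  · rw [if_pos hm, CSaux.coeffG]
    by_cases hpar : (d * i - m) % 2 = 0
    · -- even case
      set N := (d * i - m) / 2 with hN
      have hj2 : d * i - m = 2 * N := by omega
      have hgam : gammaC d i m = Module.finrank ℂ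
          ↥(Wspace d i N ⊓ LinearMap.ker (D1 d).toLinearMap) := by
        rw [gammaC, if_pos ⟨hm, hpar⟩]
      rw [hgam, hj2, CSaux2.Aset2_even]
      rcases Nat.eq_zero_or_pos N with h0 | hpos
      · rw [h0]
        rw [if_neg (by omega)]
        rw [CSaux2.dim_ker_W0]
        ring
      · have h2le : 2 * N ≤ d * i := by omega
        have hkey := CSaux2.dim_ker_W (d := d) (i := i) hpos h2le
        rw [if_pos (by omega : 2 ≤ 2 * N)]
        rw [show 2 * N - 2 = 2 * (N - 1) by omega, CSaux2.Aset2_even]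
        rw [← hkey]
        push_cast
        ring
    · -- odd case
      have hgam : gammaC d i m = 0 := by
        rw [gammaC, if_neg]
        rintro ⟨-, hc⟩
        omega
      rw [hgam, CSaux.Aset2_odd d i (d * i - m) (by omega)]
      by_cases h2j : 2 ≤ d * i - m
      · rw [if_pos h2j, CSaux.Aset2_odd d i (d * i - m - 2) (by omega)]
        simp
      · rw [if_neg h2j]
        simp
  · rw [if_neg hm, gammaC, if_neg (fun hc => hm hc.1)]
    simp
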